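/- Let φ : Ŝ → ℤ be any group homomorphism satisfying φ(x_s) = 0 and φ(y_s) = 1 for every s ∈ {0,1}^{<ℕ} and φ(p_n) = 0 for every n ≥ 0. Then the kernel of φ equals S; that is, for g ∈ Ŝ one has φ(g) = 0 if and only if g ∈ S. Equivalently, S equals the commutator subgroup [Ŝ, Ŝ]. -/

import Mathlib

/-- The Cantor set of infinite binary sequences. -/
abbrev Cantor : Type := ℕ → Bool

/-- Concatenation of a finite binary sequence with an infinite binary sequence. -/
def cat (s : List Bool) (η : Cantor) : Cantor :=
  fun n => if h : n < s.length then s.get ⟨n, h⟩ else η (n - s.length)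

/-- `s` is a (finite) prefix of the infinite sequence `ξ`. -/
def IsPrefixOf (s : List Bool) (ξ : Cantor) : Prop := ∃ η : Cantor, ξ = cat s η

/-- The group of self-homeomorphisms of a topological space, with
`(f * g) ξ = f (g ξ)` (i.e. in the right-action convention `ξ·(g h) = (ξ·g)·h`,
the product `g * f` corresponds to the word "apply `f`, then `g`"). -/
instance {α : Type*} [TopologicalSpace α] : Group (α ≃ₜ α) where
  mul f g := g.trans f
  one := Homeomorph.refl α
  inv := Homeomorph.symm
  mul_assoc _ _ _ := Homeomorph.ext fun _ => rfl
  one_mul _ := Homeomorph.ext fun _ => rfl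
  mul_one _ := Homeomorph.ext fun _ => rfl
  inv_mul_cancel f := Homeomorph.ext fun ξ => f.symm_apply_apply ξ

@[simp] lemma homeo_mul_apply {α : Type*} [TopologicalSpace α] (f g : α ≃ₜ α) (ξ : α) :
    (f * g) ξ = f (g ξ) := rfl

@[simp] lemma homeo_one_apply {α : Type*} [TopologicalSpace α] (ξ : α) :
    (1 : α ≃ₜ α) ξ = ξ := rfl

@[simp] lemma homeo_inv_apply {α : Type*} [TopologicalSpace α] (f : α ≃ₜ α) (ξ : α) :
    (f⁻¹ : α ≃ₜ α) ξ = f.symm ξ := rfl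

/-- The data of the basic homeomorphisms `x`, `y`, `x_s`, `y_s`, `p_n` of the Cantor
set, together with their recursive defining equations. -/
structure LMData where
  x : Cantor ≃ₜ Cantor
  y : Cantor ≃ₜ Cantor
  xx : List Bool → Cantor ≃ₜ Cantor
  yy : List Bool → Cantor ≃ₜ Cantor
  p : ℕ → Cantor ≃ₜ Cantor
  hx00 : ∀ η, x (cat [false, false] η) = cat [false] η
  hx01 : ∀ η, x (cat [false, true] η) = cat [true, false] η
  hx1 : ∀ η, x (cat [true] η) = cat [true, true] η
  hy00 : ∀ η, y (cat [false, false] η) = cat [false] (y η)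
  hy01 : ∀ η, y (cat [false, true] η) = cat [true, false] (y.symm η)
  hy1 : ∀ η, y (cat [true] η) = cat [true, true] (y η)
  hxx : ∀ s η, xx s (cat s η) = cat s (x η)
  hxx' : ∀ s ξ, ¬ IsPrefixOf s ξ → xx s ξ = ξ
  hyy : ∀ s η, yy s (cat s η) = cat s (y η)
  hyy' : ∀ s ξ, ¬ IsPrefixOf s ξ → yy s ξ = ξ
  hp1 : ∀ n k η, k < n → p n (cat (List.replicate k true ++ [false]) η) =
      cat (List.replicate (k + 1) true ++ [false]) η
  hp2 : ∀ n η, p n (cat (List.replicate n true ++ [false]) η) =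
      cat (List.replicate (n + 1) true) η
  hp3 : ∀ n η, p n (cat (List.replicate (n + 1) true) η) = cat [false] η

/-- Thompson's group `T`, generated by all `x_s` and all `p_n`. -/
def Tgrp (D : LMData) : Subgroup (Cantor ≃ₜ Cantor) :=
  Subgroup.closure (Set.range D.xx ∪ Set.range D.p)

/-- The group `Ŝ`, generated by all `x_s`, all `y_s` and all `p_n`. -/
def Shat (D : LMData) : Subgroup (Cantor ≃ₜ Cantor) :=
  Subgroup.closure (Set.range D.xx ∪ Set.range D.yy ∪ Set.range D.p)

/-- The homeomorphism `y₁₀ y₁₁₀⁻¹` (right-action word: first `y₁₀`, then `y₁₁₀⁻¹`). -/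
def sgen (D : LMData) : Cantor ≃ₜ Cantor :=
  (D.yy [true, true, false])⁻¹ * D.yy [true, false]

/-- The group `S`, generated by Thompson's group `T` together with `y₁₀ y₁₁₀⁻¹`. -/
def Sgrp (D : LMData) : Subgroup (Cantor ≃ₜ Cantor) :=
  Subgroup.closure (↑(Tgrp D) ∪ {sgen D})

/-- The Lodha–Moore group `_yG_y`, generated by all `x_s` and all `y_s`. -/
def LMgrp (D : LMData) : Subgroup (Cantor ≃ₜ Cantor) :=
  Subgroup.closure (Set.range D.xx ∪ Set.range D.yy)

/-! ### cat infrastructure -/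

@[simp] lemma cat_nil (η : Cantor) : cat [] η = η := by
  funext n; simp [cat]

@[simp] lemma cat_cons_zero (b : Bool) (s : List Bool) (η : Cantor) :
    cat (b :: s) η 0 = b := by simp [cat]

@[simp] lemma cat_cons_succ (b : Bool) (s : List Bool) (η : Cantor) (n : ℕ) :
    cat (b :: s) η (n+1) = cat s η n := by
  simp only [cat, List.length_cons]
  by_cases h : n < s.length
  · simp [Nat.succ_lt_succ h, h]
  · have : ¬ (n+1 < s.length + 1) := by omega
    simp [h, this]

lemma cat_append (s t : List Bool) (η : Cantor) :
    cat (s ++ t) η = cat s (cat t η) := by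
  induction s with
  | nil => simp
  | cons b s ih =>
    funext n
    cases n with
    | zero => simp
    | succ m => simp [ih]

lemma cat_inj {s : List Bool} {η η' : Cantor} (h : cat s η = cat s η') : η = η' := by
  induction s with
  | nil => simpa using h
  | cons b s ih =>
    apply ih
    funext n
    have := congrFun h (n+1)
    simpa using this

lemma cat_head {b b' : Bool} {s t : List Bool} {η η' : Cantor}
    (h : cat (b :: s) η = cat (b' :: t) η') : b = b' := by
  have := congrFun h 0; simpa using this

lemma cat_tail {b b' : Bool} {s t : List Bool} {η η' : Cantor}
    (h : cat (b :: s) η = cat (b' :: t) η') : cat s η = cat t η' := by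
  funext n
  have := congrFun h (n+1); simpa using this

lemma cat_comparable : ∀ (s t : List Bool) (η η' : Cantor),
    cat s η = cat t η' → s <+: t ∨ t <+: s := by
  intro s
  induction s with
  | nil => intro t η η' _; exact Or.inl (List.nil_prefix)
  | cons b s ih =>
    intro t η η' h
    cases t with
    | nil => exact Or.inr (List.nil_prefix)
    | cons b' t =>
      have hb := cat_head h
      have ht := cat_tail h
      rcases ih t η η' ht with h1 | h1
      · exact Or.inl (by rw [hb]; exact List.cons_prefix_cons.mpr ⟨rfl, h1⟩)
      · exact Or.inr (by rw [hb]; exact List.cons_prefix_cons.mpr ⟨rfl, h1⟩)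

def Incomp (s t : List Bool) : Prop := ¬ s <+: t ∧ ¬ t <+: s

instance (s t : List Bool) : Decidable (Incomp s t) :=
  inferInstanceAs (Decidable (¬ s <+: t ∧ ¬ t <+: s))

lemma Incomp.symm {s t : List Bool} (h : Incomp s t) : Incomp t s := ⟨h.2, h.1⟩

lemma incomp_append {s t : List Bool} (c : List Bool) (h : Incomp s t) :
    Incomp (c ++ s) (c ++ t) := by
  constructor
  · intro hp; exact h.1 ((List.prefix_append_right_inj c).mp hp)
  · intro hp; exact h.2 ((List.prefix_append_right_inj c).mp hp)

lemma incomp_ext_left {s t : List Bool} (u : List Bool) (h : Incomp s t) :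
    Incomp (s ++ u) t := by
  constructor
  · intro hp
    exact h.1 ((s.prefix_append u).trans hp)
  · intro hp
    rcases List.prefix_or_prefix_of_prefix hp (s.prefix_append u) with h1 | h1
    · exact h.2 h1
    · exact h.1 h1

lemma incomp_ext {s t : List Bool} (u v : List Bool) (h : Incomp s t) :
    Incomp (s ++ u) (t ++ v) :=
  incomp_ext_left v ((incomp_ext_left u h).symm) |>.symm

lemma not_prefixOf_cat {s t : List Bool} (h : Incomp s t) (η : Cantor) :
    ¬ IsPrefixOf s (cat t η) := by
  rintro ⟨η', e⟩
  rcases cat_comparable s t η' η e.symm with h1 | h1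
  · exact h.1 h1
  · exact h.2 h1

lemma isPrefixOf_cat (s : List Bool) (η : Cantor) : IsPrefixOf s (cat s η) := ⟨η, rfl⟩

lemma prefixOf_cat_append {s c : List Bool} {η : Cantor}
    (h : IsPrefixOf (s ++ c) (cat s η)) : IsPrefixOf c η := by
  rcases h with ⟨ζ, e⟩
  rw [cat_append] at e
  exact ⟨ζ, cat_inj e⟩

lemma not_prefixOf_append {a c : List Bool} {ξ : Cantor} (h : ¬ IsPrefixOf a ξ) :
    ¬ IsPrefixOf (a ++ c) ξ := by
  rintro ⟨ζ, rfl⟩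
  exact h (by rw [cat_append]; exact isPrefixOf_cat _ _)

lemma cantor_head (ξ : Cantor) : ξ = cat [ξ 0] (fun n => ξ (n+1)) := by
  funext n; cases n with
  | zero => simp
  | succ m => simp

lemma cases2 (ξ : Cantor) : (∃ η, ξ = cat [false] η) ∨ (∃ η, ξ = cat [true] η) := by
  cases h : ξ 0
  · exact Or.inl ⟨fun n => ξ (n+1), by rw [← h]; exact cantor_head ξ⟩
  · exact Or.inr ⟨fun n => ξ (n+1), by rw [← h]; exact cantor_head ξ⟩

lemma cases3 (ξ : Cantor) : (∃ η, ξ = cat [false, false] η) ∨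
    (∃ η, ξ = cat [false, true] η) ∨ (∃ η, ξ = cat [true] η) := by
  rcases cases2 ξ with ⟨η, rfl⟩ | h
  · rcases cases2 η with ⟨ζ, rfl⟩ | ⟨ζ, rfl⟩
    · exact Or.inl ⟨ζ, by rw [show [false,false] = [false] ++ [false] from rfl, cat_append]⟩
    · exact Or.inr (Or.inl ⟨ζ, by rw [show [false,true] = [false] ++ [true] from rfl, cat_append]⟩)
  · exact Or.inr (Or.inr h)

abbrev Homeo := Cantor ≃ₜ Cantor

section
variable {D : LMData}

/-- `f` acts on the cone at `a` as `g` acts globally, and fixes everything else. -/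
def LocalAt (f : Homeo) (a : List Bool) (g : Homeo) : Prop :=
  (∀ η, f (cat a η) = cat a (g η)) ∧ (∀ ξ, ¬ IsPrefixOf a ξ → f ξ = ξ)

/-- `f` maps the cone at `a` rigidly onto the cone at `b`. -/
abbrev Rigid (f : Homeo) (a b : List Bool) : Prop := ∀ η, f (cat a η) = cat b η

lemma localAt_yy (s : List Bool) : LocalAt (D.yy s) s D.y := ⟨D.hyy s, D.hyy' s⟩
lemma localAt_xx (s : List Bool) : LocalAt (D.xx s) s D.x := ⟨D.hxx s, D.hxx' s⟩

lemma LocalAt.inv {f : Homeo} {a : List Bool} {g : Homeo} (h : LocalAt f a g) :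
    LocalAt f⁻¹ a g⁻¹ := by
  constructor
  · intro η
    have : f (cat a (g⁻¹ η)) = cat a η := by
      rw [h.1]; simp
    rw [← this]
    exact f.symm_apply_apply _
  · intro ξ hξ
    have : f ξ = ξ := h.2 ξ hξ
    calc f⁻¹ ξ = f⁻¹ (f ξ) := by rw [this]
    _ = ξ := f.symm_apply_apply _

lemma LocalAt.mul {f f' : Homeo} {a : List Bool} {g g' : Homeo}
    (h : LocalAt f a g) (h' : LocalAt f' a g') : LocalAt (f * f') a (g * g') := by
  constructor
  · intro η
    simp only [homeo_mul_apply]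
    rw [h'.1, h.1]
  · intro ξ hξ
    simp only [homeo_mul_apply]
    rw [h'.2 ξ hξ, h.2 ξ hξ]

lemma LocalAt.ext {f f' : Homeo} {a : List Bool} {g : Homeo}
    (h : LocalAt f a g) (h' : LocalAt f' a g) : f = f' := by
  apply Homeomorph.ext
  intro ξ
  by_cases hp : IsPrefixOf a ξ
  · rcases hp with ⟨η, rfl⟩
    rw [h.1, h'.1]
  · rw [h.2 ξ hp, h'.2 ξ hp]

lemma Rigid.inv {f : Homeo} {a b : List Bool} (h : Rigid f a b) : Rigid f⁻¹ b a := by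
  intro η
  have : f (cat a η) = cat b η := h η
  rw [← this]
  exact f.symm_apply_apply _

lemma Rigid.comp {f g : Homeo} {a b c : List Bool} (h : Rigid f a b) (h' : Rigid g b c) :
    Rigid (g * f) a c := by
  intro η; simp only [homeo_mul_apply]; rw [h, h']

lemma Rigid.one (a : List Bool) : Rigid (1 : Homeo) a a := fun η => rfl

lemma Rigid.extend {f : Homeo} {a b : List Bool} (h : Rigid f a b) (c : List Bool) :
    Rigid f (a ++ c) (b ++ c) := by
  intro η; rw [cat_append, cat_append]; exact h _

lemma rigid_conj {u f : Homeo} {a b : List Bool} {g : Homeo}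
    (hu : Rigid u a b) (hf : LocalAt f a g) : LocalAt (u * f * u⁻¹) b g := by
  have hui : Rigid u⁻¹ b a := hu.inv
  constructor
  · intro η
    simp only [homeo_mul_apply]
    rw [show (u⁻¹ : Homeo) (cat b η) = cat a η from hui η, hf.1, hu]
  · intro ξ hξ
    simp only [homeo_mul_apply]
    have hna : ¬ IsPrefixOf a (u.symm ξ) := by
      rintro ⟨η, hη⟩
      apply hξ
      refine ⟨η, ?_⟩
      calc ξ = u (u.symm ξ) := (u.apply_symm_apply ξ).symm
      _ = u (cat a η) := by rw [hη]
      _ = cat b η := hu η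
    rw [show (u⁻¹ : Homeo) ξ = u.symm ξ from rfl, hf.2 _ hna]
    exact u.apply_symm_apply ξ

lemma conj_yy {u : Homeo} {a b : List Bool} (hu : Rigid u a b) :
    u * D.yy a * u⁻¹ = D.yy b :=
  LocalAt.ext (rigid_conj hu (localAt_yy a)) (localAt_yy b)

lemma conj_xx {u : Homeo} {a b : List Bool} (hu : Rigid u a b) :
    u * D.xx a * u⁻¹ = D.xx b :=
  LocalAt.ext (rigid_conj hu (localAt_xx a)) (localAt_xx b)

lemma conj_yy' {u : Homeo} {a b : List Bool} (hu : Rigid u a b) :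
    u * D.yy a = D.yy b * u := by
  have := conj_yy (D := D) hu
  calc u * D.yy a = (u * D.yy a * u⁻¹) * u := by group
  _ = D.yy b * u := by rw [this]

lemma conj_yy_inv {u : Homeo} {a b : List Bool} (hu : Rigid u a b) :
    u * (D.yy a)⁻¹ = (D.yy b)⁻¹ * u := by
  have h := conj_yy' (D := D) hu
  calc u * (D.yy a)⁻¹ = (D.yy b)⁻¹ * (D.yy b * u) * (D.yy a)⁻¹ := by group
  _ = (D.yy b)⁻¹ * (u * D.yy a) * (D.yy a)⁻¹ := by rw [← h]
  _ = (D.yy b)⁻¹ * u := by group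

lemma localAt_comm {f f' : Homeo} {a b : List Bool} {g g' : Homeo}
    (h : LocalAt f a g) (h' : LocalAt f' b g') (hab : Incomp a b) :
    Commute f f' := by
  have key : ∀ ξ, f (f' ξ) = f' (f ξ) := by
    intro ξ
    by_cases hpa : IsPrefixOf a ξ
    · rcases hpa with ⟨η, rfl⟩
      have hnb : ¬ IsPrefixOf b (cat a η) := not_prefixOf_cat hab.symm η
      have hnb' : ¬ IsPrefixOf b (cat a (g η)) := not_prefixOf_cat hab.symm _
      rw [h'.2 _ hnb, h.1, h'.2 _ hnb']
    · by_cases hpb : IsPrefixOf b ξ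
      · rcases hpb with ⟨η, rfl⟩
        have hna' : ¬ IsPrefixOf a (cat b (g' η)) := not_prefixOf_cat hab _
        rw [h.2 _ hpa, h'.1, h.2 _ hna']
      · rw [h.2 _ hpa, h'.2 _ hpb, h.2 _ hpa]
  apply Homeomorph.ext
  intro ξ
  simpa using key ξ

/-- The cone at `s ++ c` sits inside the cone at `s`. -/
lemma localAt_yy_append (s c : List Bool) : LocalAt (D.yy (s ++ c)) s (D.yy c) := by
  constructor
  · intro η
    by_cases hp : IsPrefixOf c η
    · rcases hp with ⟨ζ, rfl⟩
      rw [← cat_append, D.hyy, (localAt_yy c).1, cat_append]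
    · rw [(localAt_yy c).2 _ hp]
      apply (localAt_yy (s ++ c)).2
      intro hcon
      exact hp (prefixOf_cat_append hcon)
  · intro ξ hξ
    exact (localAt_yy (s ++ c)).2 _ (not_prefixOf_append hξ)

lemma yy_nil : D.yy [] = D.y := by
  apply Homeomorph.ext
  intro ξ
  have := D.hyy [] ξ
  simpa using this

lemma xx_nil_localAt : LocalAt (D.xx []) ([] : List Bool) D.x := localAt_xx []

lemma xx_apply_eq (ξ : Cantor) : D.xx [] ξ = D.x ξ := by
  have := D.hxx [] ξ; simpa using this

lemma xx_nil : D.xx [] = D.x := Homeomorph.ext fun ξ => xx_apply_eq ξ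

end

/-! ### Rigid consequences of the axioms -/

section
variable {D : LMData}

-- x basic rigidity
lemma rigid_x00 : Rigid D.x [false,false] [false] := D.hx00
lemma rigid_x01 : Rigid D.x [false,true] [true,false] := D.hx01
lemma rigid_x1 : Rigid D.x [true] [true,true] := D.hx1

lemma rigid_x00' (r : List Bool) : Rigid D.x ([false,false] ++ r) ([false] ++ r) :=
  rigid_x00.extend r
lemma rigid_x01' (r : List Bool) : Rigid D.x ([false,true] ++ r) ([true,false] ++ r) :=
  rigid_x01.extend r
lemma rigid_x1' (r : List Bool) : Rigid D.x ([true] ++ r) ([true,true] ++ r) :=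
  rigid_x1.extend r

-- p basic rigidity
lemma rigid_p0_1 : Rigid (D.p 0) [true] [false] := by
  intro η
  have := D.hp3 0 η
  simpa using this

lemma rigid_p0_0 : Rigid (D.p 0) [false] [true] := by
  intro η
  have := D.hp2 0 η
  simpa using this

lemma rigid_p1_0 : Rigid (D.p 1) [false] [true,false] := by
  intro η
  have := D.hp1 1 0 η (by norm_num)
  simpa using this

lemma rigid_p1_10 : Rigid (D.p 1) [true,false] [true,true] := by
  intro η
  have := D.hp2 1 η
  simpa [List.replicate] using this

lemma rigid_p1_11 : Rigid (D.p 1) [true,true] [false] := by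
  intro η
  have := D.hp3 1 η
  simpa [List.replicate] using this

lemma rigid_p2_10 : Rigid (D.p 2) [true,false] [true,true,false] := by
  intro η
  have := D.hp1 2 1 η (by norm_num)
  simpa [List.replicate] using this

lemma rigid_p2_110 : Rigid (D.p 2) [true,true,false] [true,true,true] := by
  intro η
  have := D.hp2 2 η
  simpa [List.replicate] using this

lemma rigid_p2_111 : Rigid (D.p 2) [true,true,true] [false] := by
  intro η
  have := D.hp3 2 η
  simpa [List.replicate] using this

/-! ### memberships -/

lemma xx_mem_T (s : List Bool) : D.xx s ∈ Tgrp D :=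
  Subgroup.subset_closure (Or.inl ⟨s, rfl⟩)

lemma p_mem_T (n : ℕ) : D.p n ∈ Tgrp D :=
  Subgroup.subset_closure (Or.inr ⟨n, rfl⟩)

lemma xx_mem_Shat (s : List Bool) : D.xx s ∈ Shat D :=
  Subgroup.subset_closure (Or.inl (Or.inl ⟨s, rfl⟩))

lemma yy_mem_Shat (s : List Bool) : D.yy s ∈ Shat D :=
  Subgroup.subset_closure (Or.inl (Or.inr ⟨s, rfl⟩))

lemma p_mem_Shat (n : ℕ) : D.p n ∈ Shat D :=
  Subgroup.subset_closure (Or.inr ⟨n, rfl⟩)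

lemma Tgrp_le_Shat : Tgrp D ≤ Shat D := by
  rw [Tgrp, Subgroup.closure_le]
  rintro g (⟨s, rfl⟩ | ⟨n, rfl⟩)
  · exact xx_mem_Shat s
  · exact p_mem_Shat n

lemma Tgrp_le_Sgrp : Tgrp D ≤ Sgrp D :=
  le_trans (le_refl _) (by
    intro g hg
    exact Subgroup.subset_closure (Or.inl hg))

lemma sgen_mem_Sgrp : sgen D ∈ Sgrp D :=
  Subgroup.subset_closure (Or.inr rfl)

lemma sgen_mem_Shat : sgen D ∈ Shat D :=
  mul_mem (inv_mem (yy_mem_Shat _)) (yy_mem_Shat _)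

lemma Sgrp_le_Shat : Sgrp D ≤ Shat D := by
  rw [Sgrp, Subgroup.closure_le]
  rintro g (hg | rfl)
  · exact Tgrp_le_Shat hg
  · exact sgen_mem_Shat

/-! ### navigation in T -/

lemma nav_aux : ∀ (n : ℕ) (s : List Bool), s.length ≤ n + 1 → s ≠ [] →
    ∃ u, u ∈ Tgrp D ∧ Rigid u s [false] := by
  intro n
  induction n with
  | zero =>
    intro s hlen hne
    match s, hlen with
    | [b], _ =>
      cases b
      · exact ⟨1, one_mem _, by simpa using Rigid.one [false]⟩
      · exact ⟨D.p 0, p_mem_T 0, rigid_p0_1⟩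
    | [], h => exact absurd rfl hne
  | succ n ih =>
    intro s hlen hne
    match s with
    | [] => exact absurd rfl hne
    | [b] =>
      cases b
      · exact ⟨1, one_mem _, by simpa using Rigid.one [false]⟩
      · exact ⟨D.p 0, p_mem_T 0, rigid_p0_1⟩
    | (b1 :: b2 :: r) =>
      have hlen' : (b2 :: r).length ≤ n + 1 := by
        simpa using Nat.le_of_succ_le_succ (by simpa using hlen)
      cases b1
      · -- s = false :: b2 :: r
        cases b2
        · -- 00r → x → 0r
          obtain ⟨u, hu, hru⟩ := ih (false :: r) (by simpa using hlen') (by simp)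
          refine ⟨u * D.xx [], mul_mem hu (xx_mem_T []), ?_⟩
          have h1 : Rigid (D.xx []) (false::false::r) (false::r) := by
            rw [xx_nil]
            exact rigid_x00' r
          exact h1.comp hru
        · -- 01r → x → 10r → p0 → 00r → x → 0r
          obtain ⟨u, hu, hru⟩ := ih (false :: r) (by simpa using hlen') (by simp)
          refine ⟨u * D.xx [] * D.p 0 * D.xx [],
            mul_mem (mul_mem (mul_mem hu (xx_mem_T [])) (p_mem_T 0)) (xx_mem_T []), ?_⟩
          have h1 : Rigid (D.xx []) (false::true::r) (true::false::r) := by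
            rw [xx_nil]; exact rigid_x01' r
          have h2 : Rigid (D.p 0) (true::false::r) (false::false::r) :=
            rigid_p0_1.extend (false :: r)
          have h3 : Rigid (D.xx []) (false::false::r) (false::r) := by
            rw [xx_nil]; exact rigid_x00' r
          exact ((h1.comp h2).comp h3).comp hru
      · -- s = true :: b2 :: r : p0 → false :: b2 :: r, then as above
        have h0 : Rigid (D.p 0) (true::b2::r) (false::b2::r) :=
          rigid_p0_1.extend (b2 :: r)
        cases b2
        · obtain ⟨u, hu, hru⟩ := ih (false :: r) (by simpa using hlen') (by simp)
          refine ⟨u * D.xx [] * D.p 0,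
            mul_mem (mul_mem hu (xx_mem_T [])) (p_mem_T 0), ?_⟩
          have h1 : Rigid (D.xx []) (false::false::r) (false::r) := by
            rw [xx_nil]; exact rigid_x00' r
          exact (h0.comp h1).comp hru
        · obtain ⟨u, hu, hru⟩ := ih (false :: r) (by simpa using hlen') (by simp)
          refine ⟨u * D.xx [] * D.p 0 * D.xx [] * D.p 0,
            mul_mem (mul_mem (mul_mem (mul_mem hu (xx_mem_T [])) (p_mem_T 0))
              (xx_mem_T [])) (p_mem_T 0), ?_⟩
          have h1 : Rigid (D.xx []) (false::true::r) (true::false::r) := by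
            rw [xx_nil]; exact rigid_x01' r
          have h2 : Rigid (D.p 0) (true::false::r) (false::false::r) :=
            rigid_p0_1.extend (false :: r)
          have h3 : Rigid (D.xx []) (false::false::r) (false::r) := by
            rw [xx_nil]; exact rigid_x00' r
          exact (((h0.comp h1).comp h2).comp h3).comp hru

lemma nav (s : List Bool) (hs : s ≠ []) : ∃ u, u ∈ Tgrp D ∧ Rigid u s [false] :=
  nav_aux s.length s (by omega) hs

lemma nav2 {a b : List Bool} (ha : a ≠ []) (hb : b ≠ []) :
    ∃ u, u ∈ Tgrp D ∧ Rigid u a b := by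
  obtain ⟨u, hu, hru⟩ := nav (D := D) a ha
  obtain ⟨v, hv, hrv⟩ := nav (D := D) b hb
  exact ⟨v⁻¹ * u, mul_mem (inv_mem hv) hu, hru.comp hrv.inv⟩

end

/-! ### The basic relation  y = y₁₁ y₁₀⁻¹ y₀ x  (in Lean's apply-right-first order) -/

section
variable {D : LMData}

lemma yy_inv_apply (s : List Bool) (η : Cantor) :
    (D.yy s)⁻¹ (cat s η) = cat s ((D.y)⁻¹ η) := (localAt_yy s).inv.1 η

lemma yy_inv_fix {s : List Bool} {ξ : Cantor} (h : ¬ IsPrefixOf s ξ) :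
    (D.yy s)⁻¹ ξ = ξ := (localAt_yy s).inv.2 ξ h

lemma yy_fix {s : List Bool} {ξ : Cantor} (h : ¬ IsPrefixOf s ξ) :
    D.yy s ξ = ξ := (localAt_yy s).2 ξ h

lemma I1root : D.y = D.yy [true,true] * (D.yy [true,false])⁻¹ * D.yy [false] * D.x := by
  apply Homeomorph.ext
  intro ξ
  simp only [homeo_mul_apply]
  rcases cases3 ξ with ⟨η, rfl⟩ | ⟨η, rfl⟩ | ⟨η, rfl⟩
  · rw [D.hy00, D.hx00, D.hyy [false]]
    rw [yy_inv_fix (not_prefixOf_cat (by decide) _)]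
    rw [yy_fix (not_prefixOf_cat (by decide) _)]
  · rw [D.hy01, D.hx01]
    rw [yy_fix (not_prefixOf_cat (show Incomp [false] [true,false] by decide) _)]
    rw [yy_inv_apply]
    rw [yy_fix (not_prefixOf_cat (show Incomp [true,true] [true,false] by decide) _)]
    rfl
  · rw [D.hy1, D.hx1]
    rw [yy_fix (not_prefixOf_cat (show Incomp [false] [true,true] by decide) _)]
    rw [yy_inv_fix (not_prefixOf_cat (show Incomp [true,false] [true,true] by decide) _)]
    rw [D.hyy [true,true]]

/-- The general expansion relation `y_s = y_{s11} y_{s10}⁻¹ y_{s0} x_s`. -/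
lemma I1gen (s : List Bool) :
    D.yy s = D.yy (s ++ [true,true]) * (D.yy (s ++ [true,false]))⁻¹ *
      D.yy (s ++ [false]) * D.xx s := by
  apply LocalAt.ext (localAt_yy s)
  have h1 := localAt_yy_append (D := D) s [true,true]
  have h2 := (localAt_yy_append (D := D) s [true,false]).inv
  have h3 := localAt_yy_append (D := D) s [false]
  have h4 := localAt_xx (D := D) s
  have := ((h1.mul h2).mul h3).mul h4
  rwa [← I1root] at this

end

/-! ### The pair system `K(a,b)`: `y_a⁻¹ y_b ∈ S` -/

def KK (D : LMData) (a b : List Bool) : Prop := (D.yy a)⁻¹ * D.yy b ∈ Sgrp D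

section
variable {D : LMData}

lemma comm_yy {a b : List Bool} (h : Incomp a b) : Commute (D.yy a) (D.yy b) :=
  localAt_comm (localAt_yy a) (localAt_yy b) h

lemma comm_yy_xx {a b : List Bool} (h : Incomp a b) : Commute (D.yy a) (D.xx b) :=
  localAt_comm (localAt_yy a) (localAt_xx b) h

lemma kk_refl (a : List Bool) : KK D a a := by
  show (D.yy a)⁻¹ * D.yy a ∈ Sgrp D
  rw [inv_mul_cancel]
  exact one_mem _

lemma kk_symm {a b : List Bool} (h : KK D a b) : KK D b a := by
  show (D.yy b)⁻¹ * D.yy a ∈ Sgrp D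
  have e : (D.yy b)⁻¹ * D.yy a = ((D.yy a)⁻¹ * D.yy b)⁻¹ := by group
  rw [e]
  exact inv_mem h

lemma kk_trans {a b c : List Bool} (h1 : KK D a b) (h2 : KK D b c) : KK D a c := by
  show (D.yy a)⁻¹ * D.yy c ∈ Sgrp D
  have e : (D.yy a)⁻¹ * D.yy c =
      ((D.yy a)⁻¹ * D.yy b) * ((D.yy b)⁻¹ * D.yy c) := by group
  rw [e]
  exact mul_mem h1 h2

lemma kk_move {u : Homeo} (hu : u ∈ Tgrp D) {a a' b b' : List Bool}
    (ha : Rigid u a a') (hb : Rigid u b b') (h : KK D a b) : KK D a' b' := by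
  show (D.yy a')⁻¹ * D.yy b' ∈ Sgrp D
  have e : (D.yy a')⁻¹ * D.yy b' = u * ((D.yy a)⁻¹ * D.yy b) * u⁻¹ := by
    rw [← conj_yy (D := D) ha, ← conj_yy (D := D) hb]
    group
  rw [e]
  exact mul_mem (mul_mem (Tgrp_le_Sgrp hu) h) (inv_mem (Tgrp_le_Sgrp hu))

lemma kk_seed : KK D [true,true,false] [true,false] := sgen_mem_Sgrp

lemma kk_sib0 : KK D [false,false] [false,true] := by
  have s1 : KK D [true,true,true] [true,true,false] :=
    kk_move (p_mem_T 2) rigid_p2_110 rigid_p2_10 kk_seed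
  have s2 : KK D [false,true] [false,false] := by
    refine kk_move (p_mem_T 1) ?_ ?_ s1
    · simpa using (rigid_p1_11 (D := D)).extend [true]
    · simpa using (rigid_p1_11 (D := D)).extend [false]
  exact kk_symm s2

lemma kk_sib {t : List Bool} (ht : t ≠ []) : KK D (t ++ [false]) (t ++ [true]) := by
  obtain ⟨v, hv, hrv⟩ := nav2 (D := D) (show ([false] : List Bool) ≠ [] by simp) ht
  have base : KK D ([false] ++ [false]) ([false] ++ [true]) := by
    simpa using kk_sib0 (D := D)
  exact kk_move hv (hrv.extend [false]) (hrv.extend [true]) base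

lemma P0_identity (s : List Bool) :
    (D.yy (s ++ [false]))⁻¹ * D.yy s =
      D.yy (s ++ [true,true]) * (D.yy (s ++ [true,false]))⁻¹ * D.xx s := by
  have hc1 : Commute ((D.yy (s ++ [false]))⁻¹)
      (D.yy (s ++ [true,true]) * (D.yy (s ++ [true,false]))⁻¹) :=
    Commute.mul_right
      ((comm_yy (incomp_append s (by decide))).symm.inv_left)
      ((comm_yy (incomp_append s (by decide))).symm.inv_left.inv_right)
  calc (D.yy (s ++ [false]))⁻¹ * D.yy s
      = (D.yy (s ++ [false]))⁻¹ * (D.yy (s ++ [true,true]) * (D.yy (s ++ [true,false]))⁻¹ *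
        D.yy (s ++ [false]) * D.xx s) := by rw [← I1gen]
    _ = (D.yy (s ++ [false]))⁻¹ * (D.yy (s ++ [true,true]) * (D.yy (s ++ [true,false]))⁻¹) *
        (D.yy (s ++ [false]) * D.xx s) := by group
    _ = (D.yy (s ++ [true,true]) * (D.yy (s ++ [true,false]))⁻¹) * (D.yy (s ++ [false]))⁻¹ *
        (D.yy (s ++ [false]) * D.xx s) := by rw [hc1.eq]
    _ = D.yy (s ++ [true,true]) * (D.yy (s ++ [true,false]))⁻¹ * D.xx s := by group

lemma kk_P0 (s : List Bool) : KK D (s ++ [false]) s := by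
  show (D.yy (s ++ [false]))⁻¹ * D.yy s ∈ Sgrp D
  rw [P0_identity]
  have hsib : KK D (s ++ [true,false]) (s ++ [true,true]) := by
    have h := kk_sib (D := D) (t := s ++ [true]) (by simp)
    simpa [List.append_assoc] using h
  have h := (comm_yy (D := D) (incomp_append s
    (show Incomp [true,false] [true,true] by decide))).inv_left.eq
  rw [← h]
  exact mul_mem hsib (Tgrp_le_Sgrp (xx_mem_T s))

lemma kk_A1 : KK D [true,true,true] [true] := by
  show (D.yy [true,true,true])⁻¹ * D.yy [true] ∈ Sgrp D
  have e := I1gen (D := D) [true]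
  simp only [List.cons_append, List.nil_append] at e
  rw [e]
  have e2 : (D.yy [true,true,true])⁻¹ * (D.yy [true,true,true] * (D.yy [true,true,false])⁻¹ *
      D.yy [true,false] * D.xx [true]) =
      ((D.yy [true,true,false])⁻¹ * D.yy [true,false]) * D.xx [true] := by group
  rw [e2]
  exact mul_mem kk_seed (Tgrp_le_Sgrp (xx_mem_T [true]))

lemma kk_x1 : KK D [true,true,true] [false] := by
  have h : KK D [true,true,false] [true,true,true] := by
    simpa using kk_sib (D := D) (t := [true,true]) (by simp)
  exact kk_move (p_mem_T 2) rigid_p2_110 rigid_p2_111 h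

lemma kk_nil111 : KK D [] [true,true,true] :=
  kk_trans (kk_symm (by simpa using kk_P0 (D := D) [])) (kk_symm kk_x1)

lemma kk_U_nil : KK D [true] [] :=
  kk_trans (kk_symm kk_A1) (kk_symm kk_nil111)

lemma kk_U (s : List Bool) : KK D (s ++ [true]) s := by
  rcases eq_or_ne s [] with rfl | hs
  · simpa using kk_U_nil (D := D)
  · exact kk_trans (kk_symm (kk_sib hs)) (kk_P0 s)

lemma kk_P0' (s : List Bool) : KK D (s ++ [false]) s := kk_P0 s

lemma kk_nil (a : List Bool) : KK D a [] := by
  induction a using List.reverseRecOn with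
  | nil => exact kk_refl []
  | append_singleton s b ih =>
    cases b
    · exact kk_trans (kk_P0 s) ih
    · exact kk_trans (kk_U s) ih

lemma kk_all (a b : List Bool) : KK D a b :=
  kk_trans (kk_nil a) (kk_symm (kk_nil b))

/-- The basic membership form of `kk_all`. -/
lemma kk_elt (a b : List Bool) : (D.yy a)⁻¹ * D.yy b ∈ Sgrp D := kk_all a b

end

/-! ### The pair system `E(a,b)`: `y_a y_b⁻¹ ∈ S` -/

def EE (D : LMData) (a b : List Bool) : Prop := D.yy a * (D.yy b)⁻¹ ∈ Sgrp D

section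
variable {D : LMData}

lemma prefix_or_prefix {l1 l2 l3 : List Bool} (h1 : l1 <+: l3) (h2 : l2 <+: l3) :
    l1 <+: l2 ∨ l2 <+: l1 := by
  rcases le_total l1.length l2.length with h | h
  · exact Or.inl (List.prefix_of_prefix_length_le h1 h2 h)
  · exact Or.inr (List.prefix_of_prefix_length_le h2 h1 h)

lemma incomp_flip (q : List Bool) (c : Bool) : Incomp (q ++ [c]) (q ++ [!c]) := by
  apply incomp_append
  cases c <;> decide

lemma incomp_of_prefix {d a b : List Bool} (h : Incomp d a) (hab : a <+: b) :
    Incomp d b := by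
  constructor
  · intro hdb
    rcases prefix_or_prefix hdb hab with h1 | h1
    · exact h.1 h1
    · exact h.2 h1
  · intro hbd
    exact h.2 (hab.trans hbd)

lemma ee_refl (a : List Bool) : EE D a a := by
  show D.yy a * (D.yy a)⁻¹ ∈ Sgrp D
  rw [mul_inv_cancel]; exact one_mem _

lemma ee_symm {a b : List Bool} (h : EE D a b) : EE D b a := by
  show D.yy b * (D.yy a)⁻¹ ∈ Sgrp D
  have e : D.yy b * (D.yy a)⁻¹ = (D.yy a * (D.yy b)⁻¹)⁻¹ := by group
  rw [e]; exact inv_mem h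

lemma ee_trans {a b c : List Bool} (h1 : EE D a b) (h2 : EE D b c) : EE D a c := by
  show D.yy a * (D.yy c)⁻¹ ∈ Sgrp D
  have e : D.yy a * (D.yy c)⁻¹ = (D.yy a * (D.yy b)⁻¹) * (D.yy b * (D.yy c)⁻¹) := by group
  rw [e]; exact mul_mem h1 h2

lemma ee_of_incomp {a b : List Bool} (h : Incomp a b) : EE D a b := by
  show D.yy a * (D.yy b)⁻¹ ∈ Sgrp D
  rw [(comm_yy (D := D) h).inv_right.eq]
  exact kk_elt b a

lemma ee_nonempty {a b : List Bool} (ha : a ≠ []) (hb : b ≠ []) : EE D a b := by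
  by_cases hab : Incomp a b
  · exact ee_of_incomp hab
  · rcases Decidable.not_and_iff_or_not.mp hab with h | h
    · -- a <+: b
      have hpre : a <+: b := Decidable.not_not.mp h
      rcases List.eq_nil_or_concat a with rfl | ⟨q, c, rfl⟩
      · exact absurd rfl ha
      · rw [List.concat_eq_append] at *
        have hd1 : Incomp (q ++ [!c]) (q ++ [c]) := (incomp_flip q c).symm
        have hd2 : Incomp (q ++ [!c]) b := incomp_of_prefix hd1 hpre
        exact ee_trans (ee_of_incomp hd1.symm) (ee_of_incomp hd2)
    · -- b <+: a
      have hpre : b <+: a := Decidable.not_not.mp h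
      rcases List.eq_nil_or_concat b with rfl | ⟨q, c, rfl⟩
      · exact absurd rfl hb
      · rw [List.concat_eq_append] at *
        have hd1 : Incomp (q ++ [!c]) (q ++ [c]) := (incomp_flip q c).symm
        have hd2 : Incomp (q ++ [!c]) a := incomp_of_prefix hd1 hpre
        exact ee_trans (ee_of_incomp hd2.symm) (ee_of_incomp hd1)

lemma rigid_x_of_len2 : ∀ (d : List Bool), 2 ≤ d.length →
    ∃ d', d' ≠ [] ∧ Rigid (D.x) d d' := by
  intro d hd
  match d, hd with
  | (false :: false :: r), _ =>
    exact ⟨false :: r, by simp, by simpa using rigid_x00' (D := D) r⟩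
  | (false :: true :: r), _ =>
    exact ⟨true :: false :: r, by simp, by simpa using rigid_x01' (D := D) r⟩
  | (true :: b2 :: r), _ =>
    exact ⟨true :: true :: b2 :: r, by simp, by simpa using rigid_x1' (D := D) (b2 :: r)⟩

lemma ee_nil_aux {d : List Bool} (hd : 2 ≤ d.length) : EE D [] d := by
  obtain ⟨d', hd', hrd⟩ := rigid_x_of_len2 (D := D) d hd
  show D.yy [] * (D.yy d)⁻¹ ∈ Sgrp D
  have key : D.yy [] * (D.yy d)⁻¹ =
      (D.yy [true,true] * (D.yy [true,false])⁻¹) * (D.yy [false] * (D.yy d')⁻¹) * D.x := by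
    rw [yy_nil, I1root (D := D)]
    have h1 : D.x * (D.yy d)⁻¹ = (D.yy d')⁻¹ * D.x := conj_yy_inv hrd
    calc D.yy [true,true] * (D.yy [true,false])⁻¹ * D.yy [false] * D.x * (D.yy d)⁻¹
        = D.yy [true,true] * (D.yy [true,false])⁻¹ * D.yy [false] * (D.x * (D.yy d)⁻¹) := by
          group
      _ = D.yy [true,true] * (D.yy [true,false])⁻¹ * D.yy [false] * ((D.yy d')⁻¹ * D.x) := by
          rw [h1]
      _ = (D.yy [true,true] * (D.yy [true,false])⁻¹) * (D.yy [false] * (D.yy d')⁻¹) * D.x := by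
          group
  rw [key]
  refine mul_mem (mul_mem ?_ ?_) (by rw [← xx_nil]; exact Tgrp_le_Sgrp (xx_mem_T []))
  · exact ee_of_incomp (by decide)
  · exact ee_nonempty (by simp) hd'

lemma ee_nil {b : List Bool} (hb : b ≠ []) : EE D [] b := by
  rcases List.eq_nil_or_concat b with rfl | ⟨q, c, rfl⟩
  · exact absurd rfl hb
  · rw [List.concat_eq_append]
    set d := q ++ [!c] ++ [false] with hdfn
    have hdb : Incomp d (q ++ [c]) := by
      apply Incomp.symm
      have h0 : Incomp (q ++ [c]) (q ++ [!c]) := incomp_flip q c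
      have := incomp_ext_left (s := q ++ [!c]) (t := q ++ [c]) [false] h0.symm
      exact this.symm
    have hlen : 2 ≤ d.length := by
      simp [hdfn]
    exact ee_trans (ee_nil_aux hlen) (ee_of_incomp hdb)

lemma ee_all (a b : List Bool) : EE D a b := by
  rcases eq_or_ne a [] with rfl | ha
  · rcases eq_or_ne b [] with rfl | hb
    · exact ee_refl []
    · exact ee_nil hb
  · rcases eq_or_ne b [] with rfl | hb
    · exact ee_symm (ee_nil ha)
    · exact ee_nonempty ha hb

lemma ee_elt (a b : List Bool) : D.yy a * (D.yy b)⁻¹ ∈ Sgrp D := ee_all a b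

end

/-! ### `y₁₀` normalizes `S` -/

section
variable {D : LMData}

lemma conj_sandwich_pos {b c : List Bool} {X : Homeo}
    (h : D.yy c * X * (D.yy c)⁻¹ ∈ Sgrp D) : D.yy b * X * (D.yy b)⁻¹ ∈ Sgrp D := by
  have e : D.yy b * X * (D.yy b)⁻¹ =
      (D.yy b * (D.yy c)⁻¹) * (D.yy c * X * (D.yy c)⁻¹) * (D.yy c * (D.yy b)⁻¹) := by group
  rw [e]
  exact mul_mem (mul_mem (ee_elt b c) h) (ee_elt c b)

lemma conj_sandwich_neg {b c : List Bool} {X : Homeo}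
    (h : (D.yy c)⁻¹ * X * D.yy c ∈ Sgrp D) : (D.yy b)⁻¹ * X * D.yy b ∈ Sgrp D := by
  have e : (D.yy b)⁻¹ * X * D.yy b =
      ((D.yy b)⁻¹ * D.yy c) * ((D.yy c)⁻¹ * X * D.yy c) * ((D.yy c)⁻¹ * D.yy b) := by group
  rw [e]
  exact mul_mem (mul_mem (kk_elt b c) h) (kk_elt c b)

lemma rigid_xx_of {c₀ d₀ : List Bool} (t : List Bool) (h : Rigid D.x c₀ d₀) :
    Rigid (D.xx t) (t ++ c₀) (t ++ d₀) := by
  intro η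
  rw [cat_append, D.hxx, h, cat_append]

lemma conj_xx_pos (b t : List Bool) : D.yy b * D.xx t * (D.yy b)⁻¹ ∈ Sgrp D := by
  apply conj_sandwich_pos (c := t ++ [false, false])
  have hr : Rigid (D.xx t) (t ++ [false,false]) (t ++ [false]) := rigid_xx_of t rigid_x00
  have h1 : D.xx t * (D.yy (t ++ [false,false]))⁻¹ =
      (D.yy (t ++ [false]))⁻¹ * D.xx t := conj_yy_inv hr
  have e : D.yy (t ++ [false,false]) * D.xx t * (D.yy (t ++ [false,false]))⁻¹ =
      D.yy (t ++ [false,false]) * ((D.yy (t ++ [false]))⁻¹ * D.xx t) := by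
    rw [← h1]; group
  rw [e, ← mul_assoc]
  exact mul_mem (ee_elt _ _) (Tgrp_le_Sgrp (xx_mem_T t))

lemma conj_xx_neg (b t : List Bool) : (D.yy b)⁻¹ * D.xx t * D.yy b ∈ Sgrp D := by
  apply conj_sandwich_neg (c := t ++ [false])
  have hr : Rigid ((D.xx t)⁻¹) (t ++ [false]) (t ++ [false,false]) :=
    (rigid_xx_of t rigid_x00).inv
  have h1 : (D.xx t)⁻¹ * (D.yy (t ++ [false]))⁻¹ =
      (D.yy (t ++ [false,false]))⁻¹ * (D.xx t)⁻¹ := conj_yy_inv hr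
  have e : (D.yy (t ++ [false]))⁻¹ * D.xx t * D.yy (t ++ [false]) =
      D.xx t * (((D.xx t)⁻¹ * (D.yy (t ++ [false]))⁻¹) * (D.xx t * D.yy (t ++ [false]))) := by
    group
  rw [e, h1]
  have e2 : D.xx t * ((D.yy (t ++ [false,false]))⁻¹ * (D.xx t)⁻¹ *
      (D.xx t * D.yy (t ++ [false]))) =
      D.xx t * ((D.yy (t ++ [false,false]))⁻¹ * D.yy (t ++ [false])) := by group
  rw [e2]
  exact mul_mem (Tgrp_le_Sgrp (xx_mem_T t)) (kk_elt _ _)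

lemma rigid_pn_f (n : ℕ) : ∃ c', Rigid (D.p n) [false] c' := by
  cases n with
  | zero => exact ⟨[true], rigid_p0_0⟩
  | succ m =>
    refine ⟨[true, false], fun η => ?_⟩
    have := D.hp1 (m+1) 0 η (by omega)
    simpa using this

lemma rigid_pn_inv_f (n : ℕ) :
    Rigid ((D.p n)⁻¹) [false] (List.replicate (n+1) true) := by
  have h : Rigid (D.p n) (List.replicate (n+1) true) [false] := fun η => D.hp3 n η
  exact h.inv

lemma conj_p_pos (b : List Bool) (n : ℕ) : D.yy b * D.p n * (D.yy b)⁻¹ ∈ Sgrp D := by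
  apply conj_sandwich_pos (c := [false])
  obtain ⟨c', hr⟩ := rigid_pn_f (D := D) n
  have h1 : D.p n * (D.yy [false])⁻¹ = (D.yy c')⁻¹ * D.p n := conj_yy_inv hr
  have e : D.yy [false] * D.p n * (D.yy [false])⁻¹ =
      D.yy [false] * ((D.yy c')⁻¹ * D.p n) := by rw [← h1]; group
  rw [e, ← mul_assoc]
  exact mul_mem (ee_elt _ _) (Tgrp_le_Sgrp (p_mem_T n))

lemma conj_p_neg (b : List Bool) (n : ℕ) : (D.yy b)⁻¹ * D.p n * D.yy b ∈ Sgrp D := by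
  apply conj_sandwich_neg (c := [false])
  have h1 : (D.p n)⁻¹ * (D.yy [false])⁻¹ =
      (D.yy (List.replicate (n+1) true))⁻¹ * (D.p n)⁻¹ :=
    conj_yy_inv (rigid_pn_inv_f n)
  have e : (D.yy [false])⁻¹ * D.p n * D.yy [false] =
      D.p n * (((D.p n)⁻¹ * (D.yy [false])⁻¹) * (D.p n * D.yy [false])) := by group
  rw [e, h1]
  have e2 : D.p n * ((D.yy (List.replicate (n+1) true))⁻¹ * (D.p n)⁻¹ *
      (D.p n * D.yy [false])) =
      D.p n * ((D.yy (List.replicate (n+1) true))⁻¹ * D.yy [false]) := by group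
  rw [e2]
  exact mul_mem (Tgrp_le_Sgrp (p_mem_T n)) (kk_elt _ _)

lemma comm_yy_sgen : Commute (D.yy [false]) (sgen D) := by
  have h1 : Commute (D.yy [false]) ((D.yy [true,true,false])⁻¹) :=
    (comm_yy (by decide)).inv_right
  have h2 : Commute (D.yy [false]) (D.yy [true,false]) := comm_yy (by decide)
  exact h1.mul_right h2

lemma conj_sgen_pos (b : List Bool) : D.yy b * sgen D * (D.yy b)⁻¹ ∈ Sgrp D := by
  apply conj_sandwich_pos (c := [false])
  have e : D.yy [false] * sgen D * (D.yy [false])⁻¹ = sgen D := by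
    rw [comm_yy_sgen.eq]; group
  rw [e]
  exact sgen_mem_Sgrp

lemma conj_sgen_neg (b : List Bool) : (D.yy b)⁻¹ * sgen D * D.yy b ∈ Sgrp D := by
  apply conj_sandwich_neg (c := [false])
  have e : (D.yy [false])⁻¹ * sgen D * D.yy [false] = sgen D := by
    rw [mul_assoc, ← comm_yy_sgen.eq]; group
  rw [e]
  exact sgen_mem_Sgrp

/-- The subgroup of elements conjugated into `S` by `y₁₀` on both sides. -/
def Nsub (D : LMData) : Subgroup Homeo where
  carrier := {h | D.yy [true,false] * h * (D.yy [true,false])⁻¹ ∈ Sgrp D ∧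
    (D.yy [true,false])⁻¹ * h * D.yy [true,false] ∈ Sgrp D}
  one_mem' := by
    constructor <;> · simp only [Set.mem_setOf_eq, mul_one]
                      simp only [mul_inv_cancel, inv_mul_cancel]
                      exact one_mem _
  mul_mem' := by
    rintro a b ⟨ha1, ha2⟩ ⟨hb1, hb2⟩
    constructor
    · have e : D.yy [true,false] * (a * b) * (D.yy [true,false])⁻¹ =
        (D.yy [true,false] * a * (D.yy [true,false])⁻¹) *
        (D.yy [true,false] * b * (D.yy [true,false])⁻¹) := by group
      rw [e]; exact mul_mem ha1 hb1
    · have e : (D.yy [true,false])⁻¹ * (a * b) * D.yy [true,false] =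
        ((D.yy [true,false])⁻¹ * a * D.yy [true,false]) *
        ((D.yy [true,false])⁻¹ * b * D.yy [true,false]) := by group
      rw [e]; exact mul_mem ha2 hb2
  inv_mem' := by
    rintro a ⟨ha1, ha2⟩
    constructor
    · have e : D.yy [true,false] * a⁻¹ * (D.yy [true,false])⁻¹ =
        (D.yy [true,false] * a * (D.yy [true,false])⁻¹)⁻¹ := by group
      rw [e]; exact inv_mem ha1
    · have e : (D.yy [true,false])⁻¹ * a⁻¹ * D.yy [true,false] =
        ((D.yy [true,false])⁻¹ * a * D.yy [true,false])⁻¹ := by group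
      rw [e]; exact inv_mem ha2

lemma Sgrp_le_Nsub : Sgrp D ≤ Nsub D := by
  rw [Sgrp, Subgroup.closure_le]
  rintro g (hg | rfl)
  · revert g
    have : Tgrp D ≤ Nsub D := by
      rw [Tgrp, Subgroup.closure_le]
      rintro g (⟨s, rfl⟩ | ⟨n, rfl⟩)
      · exact ⟨conj_xx_pos _ s, conj_xx_neg _ s⟩
      · exact ⟨conj_p_pos _ n, conj_p_neg _ n⟩
    intro g hg
    exact this hg
  · exact ⟨conj_sgen_pos _, conj_sgen_neg _⟩

lemma y10_mem_normalizer : D.yy [true,false] ∈ Subgroup.normalizer (Sgrp D : Set Homeo) := by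
  rw [Subgroup.mem_normalizer_iff]
  intro h
  constructor
  · intro hh
    exact (Sgrp_le_Nsub hh).1
  · intro hh
    have h2 := (Sgrp_le_Nsub hh).2
    have e : (D.yy [true,false])⁻¹ * (D.yy [true,false] * h * (D.yy [true,false])⁻¹) *
        D.yy [true,false] = h := by group
    rwa [e] at h2

lemma zpow_y10_mem_normalizer (m : ℤ) : (D.yy [true,false]) ^ m ∈ Subgroup.normalizer (Sgrp D : Set Homeo) :=
  zpow_mem y10_mem_normalizer m

lemma conj_zpow_mem_Sgrp {h : Homeo} (m : ℤ) (hh : h ∈ Sgrp D) :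
    (D.yy [true,false]) ^ m * h * ((D.yy [true,false]) ^ m)⁻¹ ∈ Sgrp D :=
  (Subgroup.mem_normalizer_iff.mp (zpow_y10_mem_normalizer m) h).mp hh

end

/-! ### Pointwise relations among `x` and the `p_n` -/

section
variable {D : LMData}

lemma rigid_p2_0 : Rigid (D.p 2) [false] [true,false] := by
  intro η
  have := D.hp1 2 0 η (by norm_num)
  simpa using this

-- cons-literal application lemmas
lemma app_p0_f (r : List Bool) (η : Cantor) :
    D.p 0 (cat (false :: r) η) = cat (true :: r) η := by
  simpa using (rigid_p0_0 (D := D)).extend r η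
lemma app_p0_t (r : List Bool) (η : Cantor) :
    D.p 0 (cat (true :: r) η) = cat (false :: r) η := by
  simpa using (rigid_p0_1 (D := D)).extend r η
lemma app_p1_f (r : List Bool) (η : Cantor) :
    D.p 1 (cat (false :: r) η) = cat (true :: false :: r) η := by
  simpa using (rigid_p1_0 (D := D)).extend r η
lemma app_p1_tf (r : List Bool) (η : Cantor) :
    D.p 1 (cat (true :: false :: r) η) = cat (true :: true :: r) η := by
  simpa using (rigid_p1_10 (D := D)).extend r η
lemma app_p1_tt (r : List Bool) (η : Cantor) :
    D.p 1 (cat (true :: true :: r) η) = cat (false :: r) η := by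
  simpa using (rigid_p1_11 (D := D)).extend r η
lemma app_p2_f (r : List Bool) (η : Cantor) :
    D.p 2 (cat (false :: r) η) = cat (true :: false :: r) η := by
  simpa using (rigid_p2_0 (D := D)).extend r η
lemma app_p2_tf (r : List Bool) (η : Cantor) :
    D.p 2 (cat (true :: false :: r) η) = cat (true :: true :: false :: r) η := by
  simpa using (rigid_p2_10 (D := D)).extend r η
lemma app_p2_ttf (r : List Bool) (η : Cantor) :
    D.p 2 (cat (true :: true :: false :: r) η) = cat (true :: true :: true :: r) η := by
  simpa using (rigid_p2_110 (D := D)).extend r η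
lemma app_p2_ttt (r : List Bool) (η : Cantor) :
    D.p 2 (cat (true :: true :: true :: r) η) = cat (false :: r) η := by
  simpa using (rigid_p2_111 (D := D)).extend r η
lemma app_x_ff (r : List Bool) (η : Cantor) :
    D.x (cat (false :: false :: r) η) = cat (false :: r) η := by
  simpa using (rigid_x00 (D := D)).extend r η
lemma app_x_ft (r : List Bool) (η : Cantor) :
    D.x (cat (false :: true :: r) η) = cat (true :: false :: r) η := by
  simpa using (rigid_x01 (D := D)).extend r η
lemma app_x_t (r : List Bool) (η : Cantor) :
    D.x (cat (true :: r) η) = cat (true :: true :: r) η := by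
  simpa using (rigid_x1 (D := D)).extend r η
lemma app_xinv_f (r : List Bool) (η : Cantor) :
    D.x.symm (cat (false :: r) η) = cat (false :: false :: r) η := by
  simpa using ((rigid_x00 (D := D)).extend r).inv η
lemma app_xinv_tf (r : List Bool) (η : Cantor) :
    D.x.symm (cat (true :: false :: r) η) = cat (false :: true :: r) η := by
  simpa using ((rigid_x01 (D := D)).extend r).inv η
lemma app_xinv_tt (r : List Bool) (η : Cantor) :
    D.x.symm (cat (true :: true :: r) η) = cat (true :: r) η := by
  simpa using ((rigid_x1 (D := D)).extend r).inv η

lemma casesP1 (ξ : Cantor) : (∃ η, ξ = cat [false] η) ∨ (∃ η, ξ = cat [true,false] η) ∨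
    (∃ η, ξ = cat [true,true] η) := by
  rcases cases2 ξ with ⟨η, rfl⟩ | ⟨η, rfl⟩
  · exact Or.inl ⟨η, rfl⟩
  · rcases cases2 η with ⟨ζ, rfl⟩ | ⟨ζ, rfl⟩
    · exact Or.inr (Or.inl ⟨ζ, by rw [show [true,false] = [true] ++ [false] from rfl, cat_append]⟩)
    · exact Or.inr (Or.inr ⟨ζ, by rw [show [true,true] = [true] ++ [true] from rfl, cat_append]⟩)

lemma casesP2 (ξ : Cantor) : (∃ η, ξ = cat [false] η) ∨ (∃ η, ξ = cat [true,false] η) ∨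
    (∃ η, ξ = cat [true,true,false] η) ∨ (∃ η, ξ = cat [true,true,true] η) := by
  rcases casesP1 ξ with h | h | ⟨η, rfl⟩
  · exact Or.inl h
  · exact Or.inr (Or.inl h)
  · rcases cases2 η with ⟨ζ, rfl⟩ | ⟨ζ, rfl⟩
    · exact Or.inr (Or.inr (Or.inl ⟨ζ, by
        rw [show [true,true,false] = [true,true] ++ [false] from rfl, cat_append]⟩))
    · exact Or.inr (Or.inr (Or.inr ⟨ζ, by
        rw [show [true,true,true] = [true,true] ++ [true] from rfl, cat_append]⟩))

lemma R2 : D.p 0 * D.p 0 = 1 := by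
  apply Homeomorph.ext; intro ξ
  simp only [homeo_mul_apply, homeo_one_apply]
  rcases cases2 ξ with ⟨η, rfl⟩ | ⟨η, rfl⟩ <;>
    simp [app_p0_f, app_p0_t]

lemma R3 : D.p 1 * D.p 1 * D.p 1 = 1 := by
  apply Homeomorph.ext; intro ξ
  simp only [homeo_mul_apply, homeo_one_apply]
  rcases casesP1 ξ with ⟨η, rfl⟩ | ⟨η, rfl⟩ | ⟨η, rfl⟩ <;>
    simp [show ([false] : List Bool) = false :: [] from rfl,
      show ([true,false] : List Bool) = true :: false :: [] from rfl,
      show ([true,true] : List Bool) = true :: true :: [] from rfl,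
      app_p1_f, app_p1_tf, app_p1_tt]

lemma R4 : D.p 2 * D.p 2 * D.p 2 * D.p 2 = 1 := by
  apply Homeomorph.ext; intro ξ
  simp only [homeo_mul_apply, homeo_one_apply]
  rcases casesP2 ξ with ⟨η, rfl⟩ | ⟨η, rfl⟩ | ⟨η, rfl⟩ | ⟨η, rfl⟩ <;>
    simp [app_p2_f, app_p2_tf, app_p2_ttf, app_p2_ttt]

lemma R6 : D.x * D.p 0 * (D.x)⁻¹ = D.p 2 * D.p 2 := by
  apply Homeomorph.ext; intro ξ
  simp only [homeo_mul_apply]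
  rcases casesP2 ξ with ⟨η, rfl⟩ | ⟨η, rfl⟩ | ⟨η, rfl⟩ | ⟨η, rfl⟩ <;>
    simp [app_p2_f, app_p2_tf, app_p2_ttf, app_p2_ttt, app_xinv_f, app_xinv_tf, app_xinv_tt,
      app_p0_f, app_p0_t, app_x_ff, app_x_ft, app_x_t]

lemma incomp_cons {l l' : List Bool} : Incomp (true :: l) (false :: l') := by
  constructor
  · intro h; rcases List.cons_prefix_cons.mp h with ⟨h1, -⟩; simp at h1
  · intro h; rcases List.cons_prefix_cons.mp h with ⟨h1, -⟩; simp at h1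

lemma incomp_rep {k n : ℕ} (h : k < n) :
    Incomp (List.replicate n true) (List.replicate k true ++ [false]) := by
  have e : List.replicate n true =
      List.replicate k true ++ List.replicate (n - k) true := by
    rw [← List.replicate_add]; congr 1; omega
  rw [e]
  apply incomp_append
  obtain ⟨m, hm⟩ : ∃ m, n - k = m + 1 := ⟨n - k - 1, by omega⟩
  rw [hm, List.replicate_succ]
  exact incomp_cons

lemma cantor_split : ∀ (m : ℕ) (ξ : Cantor),
    (∃ k, k < m ∧ ∃ η, ξ = cat (List.replicate k true ++ [false]) η) ∨
    (∃ η, ξ = cat (List.replicate m true) η) := by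
  intro m
  induction m with
  | zero => intro ξ; exact Or.inr ⟨ξ, by simp⟩
  | succ m ih =>
    intro ξ
    rcases cases2 ξ with ⟨η, rfl⟩ | ⟨η, rfl⟩
    · exact Or.inl ⟨0, by omega, η, by simp⟩
    · rcases ih η with ⟨k, hk, ζ, rfl⟩ | ⟨ζ, rfl⟩
      · refine Or.inl ⟨k + 1, by omega, ζ, ?_⟩
        rw [← cat_append]
        congr 1
      · refine Or.inr ⟨ζ, ?_⟩
        rw [← cat_append]
        congr 1

lemma cat_cons' (b : Bool) (s : List Bool) (η : Cantor) :
    cat (b :: s) η = cat [b] (cat s η) := by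
  rw [← cat_append]; rfl

lemma cat_split2 (s : List Bool) (b : Bool) (c : List Bool) (η : Cantor) :
    cat s (cat (b :: c) η) = cat (s ++ [b]) (cat c η) := by
  rw [cat_append]
  rw [cat_cons' b c η]

lemma R1n (n : ℕ) : D.p (n+1) = D.p n * (D.xx (List.replicate n true))⁻¹ := by
  apply Homeomorph.ext; intro ξ
  simp only [homeo_mul_apply]
  rcases cantor_split (n+2) ξ with ⟨k, hk, η, rfl⟩ | ⟨η, rfl⟩
  · rcases lt_trichotomy k n with hkn | rfl | hkn
    · -- k < n : xx-part fixes, both p's shift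
      have hfix : ((D.xx (List.replicate n true))⁻¹ : Homeo)
          (cat (List.replicate k true ++ [false]) η) = cat (List.replicate k true ++ [false]) η :=
        (localAt_xx _).inv.2 _ (not_prefixOf_cat (incomp_rep hkn) η)
      rw [hfix, D.hp1 n k η hkn, D.hp1 (n+1) k η (by omega)]
    · -- k = n (the variable is now `k`)
      rw [D.hp1 (k+1) k η (by omega)]
      rw [show cat (List.replicate k true ++ [false]) η
          = cat (List.replicate k true) (cat [false] η) from cat_append _ _ _]
      rw [(localAt_xx _).inv.1, show (D.x⁻¹ : Homeo) (cat [false] η)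
          = cat [false, false] η from (rigid_x00 (D := D)).inv η]
      rw [cat_split2, D.hp2 k (cat [false] η), cat_append]
    · -- k = n + 1
      have hk1 : k = n + 1 := by omega
      subst hk1
      rw [D.hp2 (n+1) η]
      have e0 : List.replicate (n+1) true ++ [false]
          = List.replicate n true ++ [true, false] := by
        rw [List.replicate_succ' (n := n) (a := true)]
        simp
      rw [e0]
      rw [show cat (List.replicate n true ++ [true, false]) η
          = cat (List.replicate n true) (cat [true, false] η) from cat_append _ _ _]
      rw [(localAt_xx _).inv.1, show (D.x⁻¹ : Homeo) (cat [true,false] η)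
          = cat [false, true] η from (rigid_x01 (D := D)).inv η]
      rw [cat_split2, D.hp2 n (cat [true] η)]
      rw [show List.replicate (n+1+1) true = List.replicate (n+1) true ++ [true] from
        List.replicate_succ' (n := n+1) (a := true)]
      rw [cat_append]
  · -- ξ in the cone 1^{n+2}
    rw [D.hp3 (n+1) η]
    have e0 : List.replicate (n+2) true = List.replicate n true ++ [true, true] := by
      rw [show n + 2 = n + (1 + 1) from by omega, List.replicate_add]
      rfl
    rw [e0]
    rw [show cat (List.replicate n true ++ [true, true]) η
        = cat (List.replicate n true) (cat [true, true] η) from cat_append _ _ _]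
    rw [(localAt_xx _).inv.1, show (D.x⁻¹ : Homeo) (cat [true,true] η)
        = cat [true] η from (rigid_x1 (D := D)).inv η]
    rw [show cat (List.replicate n true) (cat [true] η)
        = cat (List.replicate n true ++ [true]) η from (cat_append _ _ _).symm]
    rw [show List.replicate n true ++ [true] = List.replicate (n+1) true from
      (List.replicate_succ' (n := n) (a := true)).symm]
    exact (D.hp3 n η).symm

end

/-! ### The commutator subgroup of `Ŝ` -/

open scoped commutatorElement

section
variable {D : LMData}

lemma x_mem_Shat : D.x ∈ Shat D := by
  rw [← xx_nil]; exact xx_mem_Shat []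

lemma x_mem_T : D.x ∈ Tgrp D := by
  rw [← xx_nil]; exact xx_mem_T []

lemma sgen_mem_commutator : sgen D ∈ ⁅Shat D, Shat D⁆ := by
  obtain ⟨u, hu, hru⟩ := nav2 (D := D) (show ([true,true,false] : List Bool) ≠ [] by simp)
    (show ([true,false] : List Bool) ≠ [] by simp)
  have e : ⁅(D.yy [true,true,false])⁻¹, u⁆ =
      (D.yy [true,true,false])⁻¹ * (u * D.yy [true,true,false] * u⁻¹) := by
    rw [commutatorElement_def]; group
  have e2 : sgen D = ⁅(D.yy [true,true,false])⁻¹, u⁆ := by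
    rw [e, conj_yy (D := D) hru]; rfl
  rw [e2]
  exact Subgroup.commutator_mem_commutator (inv_mem (yy_mem_Shat _)) (Tgrp_le_Shat hu)

lemma xx1_mem_commutator : D.xx [true] ∈ ⁅Shat D, Shat D⁆ := by
  -- xx [t] = ((yy [t,f])⁻¹ yy [t,t,f]) * ((yy [t,t,t])⁻¹ yy [t])
  have hI := I1gen (D := D) [true]
  simp only [List.cons_append, List.nil_append] at hI
  have e : D.xx [true] = ((D.yy [true,false])⁻¹ * D.yy [true,true,false]) *
      ((D.yy [true,true,true])⁻¹ * D.yy [true]) := by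
    rw [hI]; group
  have hr1 : Rigid D.x [true,false] [true,true,false] := by
    simpa using (rigid_x1 (D := D)).extend [false]
  have c1 : (D.yy [true,false])⁻¹ * D.yy [true,true,false] = ⁅(D.yy [true,false])⁻¹, D.x⁆ := by
    rw [commutatorElement_def]
    rw [show (D.yy [true,false])⁻¹ * D.x * ((D.yy [true,false])⁻¹)⁻¹ * (D.x)⁻¹ =
      (D.yy [true,false])⁻¹ * (D.x * D.yy [true,false] * (D.x)⁻¹) from by group]
    rw [conj_yy (D := D) hr1]
  have hr2 : Rigid ((D.x)⁻¹ * (D.x)⁻¹) [true,true,true] [true] := by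
    have h1 : Rigid ((D.x)⁻¹) [true,true,true] [true,true] := by
      simpa using ((rigid_x1 (D := D)).extend [true]).inv
    have h2 : Rigid ((D.x)⁻¹) [true,true] [true] := (rigid_x1 (D := D)).inv
    exact h1.comp h2
  have c2 : (D.yy [true,true,true])⁻¹ * D.yy [true] =
      ⁅(D.yy [true,true,true])⁻¹, (D.x)⁻¹ * (D.x)⁻¹⁆ := by
    rw [commutatorElement_def]
    rw [show (D.yy [true,true,true])⁻¹ * ((D.x)⁻¹ * (D.x)⁻¹) * ((D.yy [true,true,true])⁻¹)⁻¹ *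
      ((D.x)⁻¹ * (D.x)⁻¹)⁻¹ = (D.yy [true,true,true])⁻¹ *
      (((D.x)⁻¹ * (D.x)⁻¹) * D.yy [true,true,true] * ((D.x)⁻¹ * (D.x)⁻¹)⁻¹) from by group]
    rw [conj_yy (D := D) hr2]
  rw [e, c1, c2]
  exact mul_mem
    (Subgroup.commutator_mem_commutator (inv_mem (yy_mem_Shat _)) x_mem_Shat)
    (Subgroup.commutator_mem_commutator (inv_mem (yy_mem_Shat _))
      (mul_mem (inv_mem x_mem_Shat) (inv_mem x_mem_Shat)))

lemma commutator_eq_map :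
    ⁅Shat D, Shat D⁆ = Subgroup.map (Shat D).subtype (commutator ↥(Shat D)) := by
  rw [commutator_def, Subgroup.map_commutator, ← MonoidHom.range_eq_map,
    Subgroup.range_subtype]

lemma mem_commutator_iff_of {g : Homeo} (hg : g ∈ Shat D) :
    g ∈ ⁅Shat D, Shat D⁆ ↔
      Abelianization.of (⟨g, hg⟩ : ↥(Shat D)) = 1 := by
  rw [commutator_eq_map]
  constructor
  · rintro ⟨x, hx, hval⟩
    have : x = (⟨g, hg⟩ : ↥(Shat D)) := Subtype.ext hval
    rw [this] at hx
    exact (QuotientGroup.eq_one_iff _).mpr hx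
  · intro h
    exact ⟨⟨g, hg⟩, (QuotientGroup.eq_one_iff _).mp h, rfl⟩

lemma x_and_p0_mem_commutator :
    D.x ∈ ⁅Shat D, Shat D⁆ ∧ D.p 0 ∈ ⁅Shat D, Shat D⁆ := by
  set G := ↥(Shat D)
  let A : Abelianization G := Abelianization.of (⟨D.p 0, p_mem_Shat 0⟩ : G)
  let B : Abelianization G := Abelianization.of (⟨D.x, x_mem_Shat⟩ : G)
  let C : Abelianization G := Abelianization.of (⟨D.xx [true], xx_mem_Shat [true]⟩ : G)
  let P1 : Abelianization G := Abelianization.of (⟨D.p 1, p_mem_Shat 1⟩ : G)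
  let P2 : Abelianization G := Abelianization.of (⟨D.p 2, p_mem_Shat 2⟩ : G)
  have hC : C = 1 := (mem_commutator_iff_of (xx_mem_Shat [true])).mp xx1_mem_commutator
  have hA2 : A * A = 1 := by
    rw [show A * A = Abelianization.of ((⟨D.p 0, p_mem_Shat 0⟩ : G) * ⟨D.p 0, p_mem_Shat 0⟩)
      from (map_mul _ _ _).symm]
    rw [show ((⟨D.p 0, p_mem_Shat 0⟩ : G) * ⟨D.p 0, p_mem_Shat 0⟩) = 1 from
      Subtype.ext (R2 (D := D))]
    exact map_one _
  have hP1 : P1 = A * B⁻¹ := by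
    have hsub : (⟨D.p 1, p_mem_Shat 1⟩ : G) =
        (⟨D.p 0, p_mem_Shat 0⟩ : G) * (⟨D.x, x_mem_Shat⟩ : G)⁻¹ := by
      apply Subtype.ext
      have := R1n (D := D) 0
      simpa [xx_nil] using this
    rw [show P1 = Abelianization.of (⟨D.p 1, p_mem_Shat 1⟩ : G) from rfl, hsub, map_mul, map_inv]
  have hP2 : P2 = P1 * C⁻¹ := by
    have hsub : (⟨D.p 2, p_mem_Shat 2⟩ : G) =
        (⟨D.p 1, p_mem_Shat 1⟩ : G) * (⟨D.xx [true], xx_mem_Shat [true]⟩ : G)⁻¹ := by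
      apply Subtype.ext
      have := R1n (D := D) 1
      simpa using this
    rw [show P2 = Abelianization.of (⟨D.p 2, p_mem_Shat 2⟩ : G) from rfl, hsub, map_mul, map_inv]
  have hP13 : P1 * P1 * P1 = 1 := by
    rw [show P1 * P1 * P1 = Abelianization.of
      ((⟨D.p 1, p_mem_Shat 1⟩ : G) * ⟨D.p 1, p_mem_Shat 1⟩ * ⟨D.p 1, p_mem_Shat 1⟩)
      from by rw [map_mul, map_mul]]
    rw [show ((⟨D.p 1, p_mem_Shat 1⟩ : G) * ⟨D.p 1, p_mem_Shat 1⟩ * ⟨D.p 1, p_mem_Shat 1⟩) = 1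
      from Subtype.ext (R3 (D := D))]
    exact map_one _
  have hP24 : P2 * P2 * P2 * P2 = 1 := by
    rw [show P2 * P2 * P2 * P2 = Abelianization.of
      ((⟨D.p 2, p_mem_Shat 2⟩ : G) * ⟨D.p 2, p_mem_Shat 2⟩ * ⟨D.p 2, p_mem_Shat 2⟩ *
        ⟨D.p 2, p_mem_Shat 2⟩) from by rw [map_mul, map_mul, map_mul]]
    rw [show ((⟨D.p 2, p_mem_Shat 2⟩ : G) * ⟨D.p 2, p_mem_Shat 2⟩ * ⟨D.p 2, p_mem_Shat 2⟩ *
      ⟨D.p 2, p_mem_Shat 2⟩) = 1 from Subtype.ext (R4 (D := D))]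
    exact map_one _
  have hR6 : B * A * B⁻¹ = P2 * P2 := by
    have hsub : (⟨D.x, x_mem_Shat⟩ : G) * (⟨D.p 0, p_mem_Shat 0⟩ : G) *
        (⟨D.x, x_mem_Shat⟩ : G)⁻¹ =
        (⟨D.p 2, p_mem_Shat 2⟩ : G) * (⟨D.p 2, p_mem_Shat 2⟩ : G) := by
      apply Subtype.ext
      exact R6 (D := D)
    calc B * A * B⁻¹ = Abelianization.of ((⟨D.x, x_mem_Shat⟩ : G) *
        (⟨D.p 0, p_mem_Shat 0⟩ : G) * (⟨D.x, x_mem_Shat⟩ : G)⁻¹) := by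
          rw [map_mul, map_mul, map_inv]
      _ = P2 * P2 := by rw [hsub, map_mul]
  have hA : A = P2 * P2 := by
    have : B * A * B⁻¹ = A := by
      rw [mul_comm B A, mul_assoc, mul_inv_cancel, mul_one]
    rw [← this, hR6]
  have hP2P1 : P2 = P1 := by rw [hP2, hC, inv_one, mul_one]
  have hP1one : P1 = 1 := by
    have h4 : P1 * P1 * P1 * P1 = 1 := by rw [← hP2P1]; exact hP24
    calc P1 = P1 * P1 * P1 * P1 * (P1 * P1 * P1)⁻¹ := by group
    _ = 1 := by rw [h4, hP13, inv_one, one_mul]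
  have hAone : A = 1 := by rw [hA, hP2P1, hP1one, one_mul]
  have hBone : B = 1 := by
    have := hP1
    rw [hP1one, hAone, one_mul] at this
    have : B⁻¹ = 1 := this.symm
    calc B = (B⁻¹)⁻¹ := by group
    _ = 1 := by rw [this, inv_one]
  constructor
  · exact (mem_commutator_iff_of x_mem_Shat).mpr hBone
  · exact (mem_commutator_iff_of (p_mem_Shat 0)).mpr hAone

lemma xx_mem_commutator (t : List Bool) : D.xx t ∈ ⁅Shat D, Shat D⁆ := by
  rcases eq_or_ne t [] with rfl | ht
  · rw [xx_nil]
    exact x_and_p0_mem_commutator.1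
  · obtain ⟨u, hu, hru⟩ := nav2 (D := D) (show ([true] : List Bool) ≠ [] by simp) ht
    have e : D.xx t = ⁅u, D.xx [true]⁆ * D.xx [true] := by
      rw [commutatorElement_def, ← conj_xx (D := D) hru]
      group
    rw [e]
    exact mul_mem
      (Subgroup.commutator_mem_commutator (Tgrp_le_Shat hu) (xx_mem_Shat [true]))
      xx1_mem_commutator

lemma p_mem_commutator (n : ℕ) : D.p n ∈ ⁅Shat D, Shat D⁆ := by
  induction n with
  | zero => exact x_and_p0_mem_commutator.2
  | succ m ih =>
    rw [R1n (D := D) m]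
    exact mul_mem ih (inv_mem (xx_mem_commutator _))

lemma Sgrp_le_commutator : Sgrp D ≤ ⁅Shat D, Shat D⁆ := by
  rw [Sgrp, Subgroup.closure_le]
  rintro g (hg | rfl)
  · revert g
    have : Tgrp D ≤ ⁅Shat D, Shat D⁆ := by
      rw [Tgrp, Subgroup.closure_le]
      rintro g (⟨s, rfl⟩ | ⟨n, rfl⟩)
      · exact xx_mem_commutator s
      · exact p_mem_commutator n
    intro g hg
    exact this hg
  · exact sgen_mem_commutator

end

/-- any homomorphism `φ : Ŝ → ℤ` with `φ(x_s) = 0`, `φ(y_s) = 1`,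
`φ(p_n) = 0` has kernel exactly `S`; equivalently `S = [Ŝ, Ŝ]`. -/
theorem statement8 (D : LMData) (φ : ↥(Shat D) →* Multiplicative ℤ)
    (hx : ∀ (s : List Bool) (h : D.xx s ∈ Shat D), φ ⟨D.xx s, h⟩ = Multiplicative.ofAdd 0)
    (hy : ∀ (s : List Bool) (h : D.yy s ∈ Shat D), φ ⟨D.yy s, h⟩ = Multiplicative.ofAdd 1)
    (hp : ∀ (n : ℕ) (h : D.p n ∈ Shat D), φ ⟨D.p n, h⟩ = Multiplicative.ofAdd 0) :
    (∀ (g : Cantor ≃ₜ Cantor) (h : g ∈ Shat D), (φ ⟨g, h⟩ = 1 ↔ g ∈ Sgrp D)) ∧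
    Sgrp D = ⁅Shat D, Shat D⁆ := by
  set w : Homeo := D.yy [true, false] with hw
  -- Main claim: every g ∈ Ŝ lies in the coset S · w^(φ g)
  have claim : ∀ (g : Cantor ≃ₜ Cantor) (hg : g ∈ Shat D),
      g * w ^ (-(Multiplicative.toAdd (φ ⟨g, hg⟩))) ∈ Sgrp D := by
    intro g hg
    have hg' : g ∈ Subgroup.closure ((Set.range D.xx ∪ Set.range D.yy) ∪ Set.range D.p) := hg
    refine Subgroup.closure_induction
      (p := fun g hgc => g * w ^ (-(Multiplicative.toAdd (φ ⟨g, hgc⟩))) ∈ Sgrp D)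
      ?_ ?_ ?_ ?_ hg'
    · rintro x ((⟨s, rfl⟩ | ⟨s, rfl⟩) | ⟨n, rfl⟩)
      · show D.xx s * w ^ (-(Multiplicative.toAdd (φ ⟨D.xx s, xx_mem_Shat s⟩))) ∈ Sgrp D
        rw [hx s _]
        simp only [toAdd_ofAdd, neg_zero, zpow_zero, mul_one]
        exact Tgrp_le_Sgrp (xx_mem_T s)
      · show D.yy s * w ^ (-(Multiplicative.toAdd (φ ⟨D.yy s, yy_mem_Shat s⟩))) ∈ Sgrp D
        rw [hy s _]
        simp only [toAdd_ofAdd, zpow_neg, zpow_one]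
        exact ee_elt s [true, false]
      · show D.p n * w ^ (-(Multiplicative.toAdd (φ ⟨D.p n, p_mem_Shat n⟩))) ∈ Sgrp D
        rw [hp n _]
        simp only [toAdd_ofAdd, neg_zero, zpow_zero, mul_one]
        exact Tgrp_le_Sgrp (p_mem_T n)
    · show (1 : Homeo) * w ^ (-Multiplicative.toAdd (φ 1)) ∈ Sgrp D
      rw [map_one]
      simp only [toAdd_one, neg_zero, zpow_zero, one_mul]
      exact one_mem _
    · intro a b ha hb iha ihb
      have hφ : φ ⟨a * b, mul_mem ha hb⟩ = φ ⟨a, ha⟩ * φ ⟨b, hb⟩ := by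
        rw [← map_mul]
        rfl
      rw [hφ]
      set m := Multiplicative.toAdd (φ ⟨a, ha⟩) with hm
      set n := Multiplicative.toAdd (φ ⟨b, hb⟩) with hn
      have htoAdd : Multiplicative.toAdd (φ ⟨a, ha⟩ * φ ⟨b, hb⟩) = m + n := rfl
      rw [htoAdd]
      have e : (a * b) * w ^ (-(m + n)) =
          (a * w ^ (-m)) * ((w ^ m * (b * w ^ (-n))) * (w ^ m)⁻¹) := by
        have ez : w ^ (-(m+n)) = w ^ (-n) * w ^ (-m) := by
          rw [← zpow_add]
          congr 1
          ring
        rw [ez]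
        group
      rw [e]
      exact mul_mem iha ((mul_assoc (w ^ m) _ _) ▸ conj_zpow_mem_Sgrp m ihb)
    · intro a ha iha
      have hφ : φ ⟨a⁻¹, inv_mem ha⟩ = (φ ⟨a, ha⟩)⁻¹ := by
        rw [← map_inv]
        rfl
      rw [hφ]
      set m := Multiplicative.toAdd (φ ⟨a, ha⟩) with hm
      have htoAdd : Multiplicative.toAdd ((φ ⟨a, ha⟩)⁻¹) = -m := rfl
      rw [htoAdd, neg_neg]
      have e : a⁻¹ * w ^ m =
          (w ^ (-m)) * (a * w ^ (-m))⁻¹ * (w ^ (-m))⁻¹ := by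
        rw [show w ^ (-m) = (w ^ m)⁻¹ from zpow_neg w m]
        group
      rw [e]
      exact conj_zpow_mem_Sgrp (-m) (inv_mem iha)
  -- First conjunct
  have conj1 : ∀ (g : Cantor ≃ₜ Cantor) (h : g ∈ Shat D),
      (φ ⟨g, h⟩ = 1 ↔ g ∈ Sgrp D) := by
    intro g h
    constructor
    · intro h1
      have := claim g h
      rw [h1] at this
      simpa using this
    · intro hmem
      have hker : Sgrp D ≤ Subgroup.map (Shat D).subtype φ.ker := by
        rw [Sgrp, Subgroup.closure_le]
        rintro g' (hg' | rfl)
        · have hT : Tgrp D ≤ Subgroup.map (Shat D).subtype φ.ker := by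
            rw [Tgrp, Subgroup.closure_le]
            rintro g'' (⟨s, rfl⟩ | ⟨n, rfl⟩)
            · refine Subgroup.mem_map.mpr ⟨⟨D.xx s, xx_mem_Shat s⟩,
                MonoidHom.mem_ker.mpr ?_, rfl⟩
              rw [hx s (xx_mem_Shat s)]
              rfl
            · refine Subgroup.mem_map.mpr ⟨⟨D.p n, p_mem_Shat n⟩,
                MonoidHom.mem_ker.mpr ?_, rfl⟩
              rw [hp n (p_mem_Shat n)]
              rfl
          exact hT hg'
        · refine Subgroup.mem_map.mpr ⟨⟨sgen D, sgen_mem_Shat⟩,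
            MonoidHom.mem_ker.mpr ?_, rfl⟩
          have hsplit : (⟨sgen D, sgen_mem_Shat⟩ : ↥(Shat D)) =
              (⟨D.yy [true,true,false], yy_mem_Shat _⟩ : ↥(Shat D))⁻¹ *
              (⟨D.yy [true,false], yy_mem_Shat _⟩ : ↥(Shat D)) := by
            apply Subtype.ext
            rfl
          rw [hsplit, map_mul, map_inv, hy _ (yy_mem_Shat _), hy _ (yy_mem_Shat _)]
          group
      obtain ⟨x, hxk, hval⟩ := hker hmem
      have : (⟨g, h⟩ : ↥(Shat D)) = x := Subtype.ext hval.symm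
      rw [this]
      exact hxk
  refine ⟨conj1, ?_⟩
  -- Second conjunct
  apply le_antisymm
  · exact Sgrp_le_commutator
  · rw [Subgroup.commutator_le]
    intro g1 hg1 g2 hg2
    have hmem : ⁅g1, g2⁆ ∈ Shat D := by
      rw [commutatorElement_def]
      exact mul_mem (mul_mem (mul_mem hg1 hg2) (inv_mem hg1)) (inv_mem hg2)
    refine (conj1 ⁅g1, g2⁆ hmem).mp ?_
    have hsub : (⟨⁅g1, g2⁆, hmem⟩ : ↥(Shat D)) = ⁅(⟨g1, hg1⟩ : ↥(Shat D)), ⟨g2, hg2⟩⁆ := by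
      apply Subtype.ext
      rfl
    rw [hsub, map_commutatorElement]
    exact commutatorElement_eq_one_iff_commute.mpr (mul_comm _ _)
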